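/- (Lidskii–Kato eigenvalue perturbation inequality.) Let A and B be Hermitian d×d complex matrices, let α_1 ≥ α_2 ≥ ... ≥ α_d and β_1 ≥ β_2 ≥ ... ≥ β_d be their eigenvalues listed in decreasing order, and let γ_1, ..., γ_d be the eigenvalues of C = A - B. Then ∑_{k=1}^{d} |β_k - α_k|² ≤ ∑_{k=1}^{d} |γ_k|². -/

import Mathlib

open Matrix Finset

private theorem hw_traceSq {d : ℕ} {M : Matrix (Fin d) (Fin d) ℂ} (hM : M.IsHermitian) :
    (M * M).trace = ↑(∑ i, hM.eigenvalues i ^ 2) := by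
  set U : Matrix (Fin d) (Fin d) ℂ := ↑hM.eigenvectorUnitary with hU
  have h1 : star U * U = 1 := Matrix.mem_unitaryGroup_iff'.mp hM.eigenvectorUnitary.2
  set D : Matrix (Fin d) (Fin d) ℂ := Matrix.diagonal (RCLike.ofReal ∘ hM.eigenvalues) with hD
  have hspec : M = U * D * star U := hM.spectral_theorem
  have key : M * M = U * (D * D) * star U := by
    rw [hspec]
    rw [show U * D * star U * (U * D * star U) = U * D * (star U * U) * D * star U by
      noncomm_ring]
    rw [h1]; noncomm_ring
  rw [key, Matrix.trace_mul_cycle, ← mul_assoc, h1, one_mul]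
  simp [hD, Matrix.diagonal_mul_diagonal, Matrix.trace_diagonal, sq]

private theorem hw_traceDWDW {d : ℕ} (a b : Fin d → ℝ) (W : Matrix (Fin d) (Fin d) ℂ) :
    (Matrix.diagonal (fun i => (a i : ℂ)) * W * Matrix.diagonal (fun j => (b j : ℂ)) * star W).trace
      = ↑(∑ i, ∑ j, a i * b j * Complex.normSq (W i j)) := by
  push_cast
  simp only [Matrix.trace, Matrix.diag, Matrix.mul_apply, Matrix.diagonal_apply,
    Matrix.star_apply, Complex.star_def, mul_ite, ite_mul, zero_mul, mul_zero,
    Finset.sum_ite_eq, Finset.sum_ite_eq', Finset.mem_univ, if_true]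
  refine Finset.sum_congr rfl fun i _ => ?_
  refine Finset.sum_congr rfl fun j _ => ?_
  rw [show (a i:ℂ) * W i j * ↑(b j) * (starRingEnd ℂ) (W i j) = (W i j * (starRingEnd ℂ) (W i j)) * (↑(a i) * ↑(b j)) by ring, Complex.mul_conj]
  ring

private theorem hw_normSq_DS {d : ℕ} {W : Matrix (Fin d) (Fin d) ℂ}
    (h1 : W * star W = 1) (h2 : star W * W = 1) :
    (Matrix.of fun i j => Complex.normSq (W i j)) ∈ doublyStochastic ℝ (Fin d) := by
  rw [mem_doublyStochastic_iff_sum]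
  refine ⟨fun i j => Complex.normSq_nonneg _, fun i => ?_, fun j => ?_⟩
  · have := congrArg (fun M => M i i) h1
    simp only [Matrix.mul_apply, Matrix.star_apply, Complex.star_def, Matrix.one_apply_eq] at this
    have : ∑ j, ((Complex.normSq (W i j) : ℂ)) = 1 := by
      rw [← this]
      exact Finset.sum_congr rfl fun j _ => (Complex.mul_conj _).symm
    have := congrArg Complex.re this
    simpa using this
  · have := congrArg (fun M => M j j) h2
    simp only [Matrix.mul_apply, Matrix.star_apply, Complex.star_def, Matrix.one_apply_eq] at this
    have : ∑ i, ((Complex.normSq (W i j) : ℂ)) = 1 := by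
      rw [← this]
      refine Finset.sum_congr rfl fun i _ => ?_
      rw [mul_comm, Complex.mul_conj]
    have := congrArg Complex.re this
    simpa using this

private theorem hw_ds_bound {d : ℕ} {S : Matrix (Fin d) (Fin d) ℝ}
    (hS : S ∈ doublyStochastic ℝ (Fin d))
    (a b α β : Fin d → ℝ) (hαmono : Antitone α) (hβmono : Antitone β)
    (e e' : Equiv.Perm (Fin d)) (ha : α = a ∘ e) (hb : β = b ∘ e') :
    ∑ i, ∑ j, a i * b j * S i j ≤ ∑ k, α k * β k := by
  have hmono : Monovary β α := by
    intro i j h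
    rcases le_or_gt i j with hij | hij
    · exact absurd (hαmono hij) (not_le.mpr h)
    · exact hβmono hij.le
  have stepA : ∀ σ : Equiv.Perm (Fin d), ∑ i, a i * b (σ i) ≤ ∑ k, α k * β k := by
    intro σ
    have h1 : ∑ i, a i * b (σ i) = ∑ k, β ((e.trans (σ.trans e'⁻¹)) k) * α k := by
      rw [← Equiv.sum_comp e (fun i => a i * b (σ i))]
      refine Finset.sum_congr rfl fun k _ => ?_
      have h2 : α k = a (e k) := by rw [ha]; rfl
      have h3 : β ((e.trans (σ.trans e'⁻¹)) k) = b (σ (e k)) := by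
        rw [hb]; simp
      rw [h2, h3]; ring
    rw [h1]
    have := hmono.sum_comp_perm_smul_le_sum_smul (σ := e.trans (σ.trans e'⁻¹))
    simpa [smul_eq_mul, mul_comm] using this
  obtain ⟨w, hw0, hw1, hwS⟩ := exists_eq_sum_perm_of_mem_doublyStochastic hS
  have hSij : ∀ i j, S i j = ∑ σ : Equiv.Perm (Fin d), w σ * (σ.permMatrix ℝ) i j := by
    intro i j; rw [← hwS]; simp [Matrix.sum_apply]
  have key : ∑ i, ∑ j, a i * b j * S i j
      = ∑ σ : Equiv.Perm (Fin d), w σ * ∑ i, a i * b (σ i) := by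
    calc ∑ i, ∑ j, a i * b j * S i j
        = ∑ i, ∑ σ : Equiv.Perm (Fin d), w σ * (a i * b (σ i)) := by
          refine Finset.sum_congr rfl fun i _ => ?_
          simp only [hSij, Finset.mul_sum]
          rw [Finset.sum_comm]
          refine Finset.sum_congr rfl fun σ _ => ?_
          simp only [Equiv.Perm.permMatrix, PEquiv.toMatrix_apply, Equiv.toPEquiv_apply,
            Option.mem_def, Option.some.injEq, mul_ite, mul_one, mul_zero, ite_mul, zero_mul]
          rw [Finset.sum_ite_eq Finset.univ (σ i) (fun j => a i * b j * w σ)]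
          simp [mul_comm, mul_assoc, mul_left_comm]
      _ = ∑ σ : Equiv.Perm (Fin d), w σ * ∑ i, a i * b (σ i) := by
          rw [Finset.sum_comm]
          simp [Finset.mul_sum]
  rw [key]
  calc ∑ σ : Equiv.Perm (Fin d), w σ * ∑ i, a i * b (σ i)
      ≤ ∑ σ : Equiv.Perm (Fin d), w σ * ∑ k, α k * β k :=
        Finset.sum_le_sum fun σ _ => mul_le_mul_of_nonneg_left (stepA σ) (hw0 σ)
    _ = ∑ k, α k * β k := by rw [← Finset.sum_mul, hw1, one_mul]

theorem stmt_4 (d : ℕ) (A B : Matrix (Fin d) (Fin d) ℂ)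
    (hA : A.IsHermitian) (hB : B.IsHermitian) (hC : (A - B).IsHermitian)
    (α β : Fin d → ℝ)
    (hαmono : Antitone α) (hβmono : Antitone β)
    (hα : ∃ e : Equiv.Perm (Fin d), α = hA.eigenvalues ∘ e)
    (hβ : ∃ e : Equiv.Perm (Fin d), β = hB.eigenvalues ∘ e) :
    ∑ k, |β k - α k| ^ 2 ≤ ∑ k, |hC.eigenvalues k| ^ 2 := by
  obtain ⟨e, ha⟩ := hα
  obtain ⟨e', hb⟩ := hβ
  set a : Fin d → ℝ := hA.eigenvalues with ha'
  set b : Fin d → ℝ := hB.eigenvalues with hb'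
  set c : Fin d → ℝ := hC.eigenvalues with hc'
  set U : Matrix (Fin d) (Fin d) ℂ := ↑hA.eigenvectorUnitary with hUdef
  set V : Matrix (Fin d) (Fin d) ℂ := ↑hB.eigenvectorUnitary with hVdef
  have hU1 : U * star U = 1 := Matrix.mem_unitaryGroup_iff.mp hA.eigenvectorUnitary.2
  have hU2 : star U * U = 1 := Matrix.mem_unitaryGroup_iff'.mp hA.eigenvectorUnitary.2
  have hV1 : V * star V = 1 := Matrix.mem_unitaryGroup_iff.mp hB.eigenvectorUnitary.2
  have hV2 : star V * V = 1 := Matrix.mem_unitaryGroup_iff'.mp hB.eigenvectorUnitary.2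
  set W : Matrix (Fin d) (Fin d) ℂ := star U * V with hWdef
  have hWstar : star W = star V * U := by rw [hWdef, StarMul.star_mul, star_star]
  have hW1 : W * star W = 1 := by
    rw [hWdef, hWstar, mul_assoc, ← mul_assoc V, hV1, one_mul, hU2]
  have hW2 : star W * W = 1 := by
    rw [hWdef, hWstar, mul_assoc, ← mul_assoc U, hU1, one_mul, hV2]
  set Da : Matrix (Fin d) (Fin d) ℂ := Matrix.diagonal (fun i => (a i : ℂ)) with hDa
  set Db : Matrix (Fin d) (Fin d) ℂ := Matrix.diagonal (fun j => (b j : ℂ)) with hDb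
  have hDa' : Da = Matrix.diagonal (RCLike.ofReal ∘ a) := rfl
  have hDb' : Db = Matrix.diagonal (RCLike.ofReal ∘ b) := rfl
  set T : ℝ := ∑ i, ∑ j, a i * b j * Complex.normSq (W i j) with hT
  -- trace(A*B) = T
  have hAB : U * (Da * W * Db * star W) * star U = A * B := by
    rw [hWstar, hWdef]
    calc U * (Da * (star U * V) * Db * (star V * U)) * star U
        = (U * Da * star U) * (V * Db * star V) * (U * star U) := by noncomm_ring
      _ = A * B := by
          rw [hU1, mul_one, hDa', hDb', ← (show A = U * Matrix.diagonal (RCLike.ofReal ∘ a) * star U from hA.spectral_theorem),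
            ← (show B = V * Matrix.diagonal (RCLike.ofReal ∘ b) * star V from hB.spectral_theorem)]
  have tAB : (A * B).trace = (T : ℂ) := by
    rw [← hAB, Matrix.trace_mul_cycle, ← mul_assoc, hU2, one_mul, hw_traceDWDW a b W, hT]
  -- trace identities for squares
  have tA2 : (A * A).trace = ↑(∑ i, a i ^ 2) := hw_traceSq hA
  have tB2 : (B * B).trace = ↑(∑ i, b i ^ 2) := hw_traceSq hB
  have tC2 : ((A - B) * (A - B)).trace = ↑(∑ i, c i ^ 2) := hw_traceSq hC
  have hCtr : ((A - B) * (A - B)).trace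
      = (A * A).trace + (B * B).trace - 2 * (A * B).trace := by
    rw [sub_mul, mul_sub, mul_sub, Matrix.trace_sub, Matrix.trace_sub, Matrix.trace_sub,
      Matrix.trace_mul_comm B A]
    ring
  have hreal : ∑ i, c i ^ 2 = ∑ i, a i ^ 2 + ∑ i, b i ^ 2 - 2 * T := by
    have : ((∑ i, c i ^ 2 : ℝ) : ℂ) = ((∑ i, a i ^ 2 + ∑ i, b i ^ 2 - 2 * T : ℝ) : ℂ) := by
      rw [← tC2, hCtr, tA2, tB2, tAB]
      push_cast
      ring
    exact_mod_cast this
  -- sums over permutations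
  have hsa : ∑ k, α k ^ 2 = ∑ i, a i ^ 2 := by
    rw [← Equiv.sum_comp e (fun i => a i ^ 2)]
    exact Finset.sum_congr rfl fun k _ => by rw [ha]; rfl
  have hsb : ∑ k, β k ^ 2 = ∑ i, b i ^ 2 := by
    rw [← Equiv.sum_comp e' (fun i => b i ^ 2)]
    exact Finset.sum_congr rfl fun k _ => by rw [hb]; rfl
  -- the key inequality
  have hbound : T ≤ ∑ k, α k * β k := by
    have := hw_ds_bound (hw_normSq_DS hW1 hW2) a b α β hαmono hβmono e e' ha hb
    simpa [hT] using this
  -- expand LHS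
  have expandL : ∑ k, |β k - α k| ^ 2
      = ∑ k, β k ^ 2 + ∑ k, α k ^ 2 - 2 * ∑ k, α k * β k := by
    calc ∑ k, |β k - α k| ^ 2 = ∑ k, (β k ^ 2 + α k ^ 2 - 2 * (α k * β k)) := by
          refine Finset.sum_congr rfl fun k _ => ?_
          rw [sq_abs]; ring
      _ = ∑ k, β k ^ 2 + ∑ k, α k ^ 2 - 2 * ∑ k, α k * β k := by
          rw [Finset.sum_sub_distrib, Finset.sum_add_distrib, Finset.mul_sum]
  have expandR : ∑ k, |c k| ^ 2 = ∑ i, a i ^ 2 + ∑ i, b i ^ 2 - 2 * T := by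
    rw [← hreal]
    exact Finset.sum_congr rfl fun k _ => by rw [sq_abs]
  rw [expandL, expandR, hsa, hsb]
  linarith
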